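/- Let X and Y be independent exponential random variables with means m_x > 0 and m_y > 0. Then for every u ≥ 0, the cumulative distribution function of the ratio X/(Y+1) satisfies ℙ( X/(Y + 1) ≤ u ) = 1 − ( m_x/(m_x + u·m_y) )·exp(−u/m_x). -/

import Mathlib

open MeasureTheory ProbabilityTheory Real

open Set in
lemma integral_exp_neg_mul_Ioi_zero {b : ℝ} (hb : 0 < b) :
    ∫ x in Ioi (0:ℝ), Real.exp (-(b * x)) = b⁻¹ := by
  have := integral_comp_mul_left_Ioi (fun x => Real.exp (-x)) 0 hb
  simp only [mul_zero, integral_exp_neg_Ioi_zero, smul_eq_mul, mul_one] at this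
  simpa [neg_mul] using this

/-- **CDF of `γ_R = X/(Y+1)` (Appendix D).** For independent exponentials `X, Y` with means
`m_x, m_y > 0` and `u ≥ 0`, `ℙ(X/(Y+1) ≤ u) = 1 - (m_x/(m_x + u m_y)) e^{-u/m_x}`. -/
theorem cdf_ratio_exponentials
    {Ω : Type*} [MeasurableSpace Ω] (μ : Measure Ω) [IsProbabilityMeasure μ]
    (X Y : Ω → ℝ) (hXm : Measurable X) (hYm : Measurable Y)
    (hindep : IndepFun X Y μ)
    (mx my : ℝ) (hmx : 0 < mx) (hmy : 0 < my)
    (hX : Measure.map X μ = expMeasure mx⁻¹)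
    (hY : Measure.map Y μ = expMeasure my⁻¹)
    (u : ℝ) (hu : 0 ≤ u) :
    (μ {ω | X ω / (Y ω + 1) ≤ u}).toReal =
      1 - (mx / (mx + u * my)) * Real.exp (-u / mx) := by
  classical
  set κ : Measure ℝ := expMeasure mx⁻¹ with hκ
  set ν : Measure ℝ := expMeasure my⁻¹ with hν
  haveI : IsProbabilityMeasure κ := isProbabilityMeasure_expMeasure (inv_pos.mpr hmx)
  haveI : IsProbabilityMeasure ν := isProbabilityMeasure_expMeasure (inv_pos.mpr hmy)
  have hκd : κ = volume.withDensity (exponentialPDF mx⁻¹) := rfl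
  have hνd : ν = volume.withDensity (exponentialPDF my⁻¹) := rfl
  -- the pair (Y, X)
  have hpair : Measure.map (fun ω => (Y ω, X ω)) μ = ν.prod κ := by
    rw [← hX, ← hY]
    exact (indepFun_iff_map_prod_eq_prod_map_map hYm.aemeasurable hXm.aemeasurable).mp
      hindep.symm
  set T : Set (ℝ × ℝ) := {p : ℝ × ℝ | p.2 / (p.1 + 1) ≤ u} with hTdef
  have hT : MeasurableSet T :=
    measurableSet_le (measurable_snd.div (measurable_fst.add measurable_const))
      measurable_const
  have h1 : μ {ω | X ω / (Y ω + 1) ≤ u} = (ν.prod κ) T := by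
    rw [← hpair, Measure.map_apply (hYm.prodMk hXm) hT]
    rfl
  rw [h1, Measure.prod_apply hT]
  -- a.e. rewrite of the slice measure
  have hν_ae : ∀ᵐ y ∂ν, 0 ≤ y := by
    rw [ae_iff]
    have : {y : ℝ | ¬ 0 ≤ y} = Set.Iio 0 := by ext y; simp [Set.mem_Iio, not_le]
    rw [this, hνd, withDensity_apply _ measurableSet_Iio]
    exact lintegral_exponentialPDF_of_nonpos le_rfl
  have hslice : ∀ᵐ y ∂ν, κ (Prod.mk y ⁻¹' T) =
      ENNReal.ofReal (1 - Real.exp (-(mx⁻¹ * (u * (y + 1))))) := by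
    filter_upwards [hν_ae] with y hy
    have hy1 : (0:ℝ) < y + 1 := by linarith
    have hset : Prod.mk y ⁻¹' T = Set.Iic (u * (y + 1)) := by
      ext x
      simp only [T, Set.mem_preimage, Set.mem_setOf_eq, Set.mem_Iic]
      rw [div_le_iff₀ hy1]
    rw [hset, hκd, withDensity_apply _ measurableSet_Iic,
      lintegral_exponentialPDF_eq_antiDeriv (inv_pos.mpr hmx),
      if_pos (by positivity)]
  rw [lintegral_congr_ae hslice]
  -- unfold ν as a density
  have hg_meas : Measurable fun y : ℝ =>
      ENNReal.ofReal (1 - Real.exp (-(mx⁻¹ * (u * (y + 1))))) := by fun_prop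
  have hpdf : Measurable (exponentialPDF my⁻¹) :=
    (measurable_exponentialPDFReal my⁻¹).ennreal_ofReal
  rw [hνd, lintegral_withDensity_eq_lintegral_mul _ hpdf hg_meas]
  -- split ℝ = Iio 0 ∪ Ici 0; the Iio 0 part vanishes
  have hsplit := lintegral_add_compl
    (fun y => (exponentialPDF my⁻¹ * fun y =>
      ENNReal.ofReal (1 - Real.exp (-(mx⁻¹ * (u * (y + 1)))))) y)
    (measurableSet_Iio (a := (0:ℝ))) (μ := volume)
  rw [← hsplit, Set.compl_Iio]
  have hzero : ∫⁻ y in Set.Iio (0:ℝ), (exponentialPDF my⁻¹ * fun y =>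
      ENNReal.ofReal (1 - Real.exp (-(mx⁻¹ * (u * (y + 1)))))) y = 0 := by
    have hz : ∀ y ∈ Set.Iio (0:ℝ), (exponentialPDF my⁻¹ * fun y =>
        ENNReal.ofReal (1 - Real.exp (-(mx⁻¹ * (u * (y + 1)))))) y = (fun _ => (0:ENNReal)) y :=
      fun y hy => by simp [exponentialPDF_of_neg (Set.mem_Iio.mp hy)]
    rw [setLIntegral_congr_fun_ae measurableSet_Iio (ae_of_all _ hz), lintegral_zero]
  rw [hzero, zero_add]
  -- rewrite the integrand as ofReal of a real function on Ici 0
  set H : ℝ → ℝ := fun y => my⁻¹ * Real.exp (-(my⁻¹ * y)) -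
    my⁻¹ * Real.exp (-(mx⁻¹ * u)) * Real.exp (-((my⁻¹ + mx⁻¹ * u) * y)) with hHdef
  have hexpand : ∀ y : ℝ, H y =
      my⁻¹ * Real.exp (-(my⁻¹ * y)) * (1 - Real.exp (-(mx⁻¹ * (u * (y + 1))))) := by
    intro y
    have e1 : Real.exp (-(mx⁻¹ * u)) * Real.exp (-((my⁻¹ + mx⁻¹ * u) * y))
        = Real.exp (-(my⁻¹ * y)) * Real.exp (-(mx⁻¹ * (u * (y + 1)))) := by
      rw [← Real.exp_add, ← Real.exp_add]
      congr 1
      ring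
    simp only [hHdef]
    linear_combination (-my⁻¹) * e1
  have hcongr : ∫⁻ y in Set.Ici (0:ℝ), (exponentialPDF my⁻¹ * fun y =>
      ENNReal.ofReal (1 - Real.exp (-(mx⁻¹ * (u * (y + 1)))))) y
      = ∫⁻ y in Set.Ici (0:ℝ), ENNReal.ofReal (H y) := by
    refine setLIntegral_congr_fun_ae measurableSet_Ici (ae_of_all _ (fun y (hy : 0 ≤ y) => ?_))
    simp only [Pi.mul_apply, exponentialPDF_of_nonneg hy]
    rw [← ENNReal.ofReal_mul (by positivity)]
    congr 1
    rw [hexpand y]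
  rw [hcongr]
  -- integrability facts
  have hb : (0:ℝ) < my⁻¹ + mx⁻¹ * u := by positivity
  have hint1 : IntegrableOn (fun y : ℝ => my⁻¹ * Real.exp (-(my⁻¹ * y))) (Set.Ioi 0) := by
    simpa [neg_mul, IntegrableOn] using ((exp_neg_integrableOn_Ioi 0 (inv_pos.mpr hmy)).const_mul my⁻¹)
  have hint2 : IntegrableOn (fun y : ℝ =>
      my⁻¹ * Real.exp (-(mx⁻¹ * u)) * Real.exp (-((my⁻¹ + mx⁻¹ * u) * y))) (Set.Ioi 0) := by
    have h0 := (exp_neg_integrableOn_Ioi 0 hb).const_mul (my⁻¹ * Real.exp (-(mx⁻¹ * u)))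
    exact h0.congr (ae_of_all _ fun y => by simp only [neg_mul])
  have hHint : IntegrableOn H (Set.Ici 0) := by
    rw [integrableOn_Ici_iff_integrableOn_Ioi]
    exact hint1.sub hint2
  have hHnn : 0 ≤ᵐ[volume.restrict (Set.Ici (0:ℝ))] H := by
    rw [Filter.EventuallyLE, ae_restrict_iff' measurableSet_Ici]
    refine ae_of_all _ (fun y hy => ?_)
    have hy0 : (0:ℝ) ≤ y := hy
    simp only [Pi.zero_apply]
    rw [hexpand y]
    have h5 : Real.exp (-(mx⁻¹ * (u * (y + 1)))) ≤ 1 :=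
      Real.exp_le_one_iff.mpr (neg_nonpos.mpr (mul_nonneg (inv_pos.mpr hmx).le (mul_nonneg hu (by linarith))))
    have h6 : (0:ℝ) ≤ my⁻¹ * Real.exp (-(my⁻¹ * y)) := by positivity
    nlinarith
  rw [← ofReal_integral_eq_lintegral_ofReal hHint hHnn]
  -- compute the real integral
  have hval : ∫ y in Set.Ici (0:ℝ), H y = 1 - mx / (mx + u * my) * Real.exp (-u / mx) := by
    rw [integral_Ici_eq_integral_Ioi, hHdef]
    rw [integral_sub hint1 hint2, integral_const_mul, integral_const_mul,
      integral_exp_neg_mul_Ioi_zero (inv_pos.mpr hmy), integral_exp_neg_mul_Ioi_zero hb]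
    have h2 : my⁻¹ * (my⁻¹)⁻¹ = 1 := by field_simp
    rw [h2]
    have h3 : my⁻¹ * Real.exp (-(mx⁻¹ * u)) * (my⁻¹ + mx⁻¹ * u)⁻¹
        = mx / (mx + u * my) * Real.exp (-u / mx) := by
      rw [show -(mx⁻¹ * u) = -u / mx by field_simp]
      have hne1 : mx ≠ 0 := hmx.ne'
      have hne2 : my ≠ 0 := hmy.ne'
      have hne3 : my⁻¹ + mx⁻¹ * u ≠ 0 := hb.ne'
      have hne4 : mx + u * my ≠ 0 := by positivity
      field_simp
    rw [h3]
  rw [hval, ENNReal.toReal_ofReal]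
  have hfrac : mx / (mx + u * my) ≤ 1 := by
    rw [div_le_one (by positivity)]; nlinarith
  have hexp : Real.exp (-u / mx) ≤ 1 := by
    apply Real.exp_le_one_iff.mpr; rw [neg_div]; simp [div_nonneg hu hmx.le]
  nlinarith [hfrac, hexp, Real.exp_pos (-u/mx), div_pos hmx (by positivity : (0:ℝ) < mx + u*my)]
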